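/- If q is a prime with q ≡ −1 (mod 165), then q is not the special prime of any odd perfect number; that is, there is no odd perfect number n = q^e m² with q prime, gcd(q, m) = 1, and q ≡ e ≡ 1 (mod 4). -/
import Mathlib

open Finset

private lemma sum_pow_lb (p c d : ℕ) (k0 : ℕ)
    (hbase : c * p ^ k0 ≤ d * ∑ i ∈ range (k0 + 1), p ^ i)
    (hstep : c * p ≤ c + d * p) :
    ∀ k, k0 ≤ k → c * p ^ k ≤ d * ∑ i ∈ range (k + 1), p ^ i := by
  intro k hk
  induction k, hk using Nat.le_induction with
  | base => exact hbase
  | succ k hk ih =>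
    have h1 : c * p ^ (k + 1) = (c * p) * p ^ k := by ring
    have h2 : (c * p) * p ^ k ≤ (c + d * p) * p ^ k :=
      Nat.mul_le_mul_right _ hstep
    have h3 : (c + d * p) * p ^ k = c * p ^ k + d * p ^ (k + 1) := by ring
    have h4 : c * p ^ k + d * p ^ (k + 1) ≤ d * (∑ i ∈ range (k + 1), p ^ i) + d * p ^ (k + 1) :=
      Nat.add_le_add_right ih _
    have h5 : d * (∑ i ∈ range (k + 1), p ^ i) + d * p ^ (k + 1)
        = d * ∑ i ∈ range (k + 1 + 1), p ^ i := by
      rw [Finset.sum_range_succ (n := k + 1)]; ring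
    omega

private lemma geom_dvd (q : ℕ) : ∀ r : ℕ, (q + 1) ∣ ∑ i ∈ range (2 * r + 2), q ^ i := by
  intro r
  induction r with
  | zero => simpa [Finset.sum_range_succ] using ⟨1, by ring⟩
  | succ r ih =>
    have h : (2 * (r + 1) + 2) = (2 * r + 2) + 1 + 1 := by ring
    rw [h, Finset.sum_range_succ, Finset.sum_range_succ]
    have h2 : ∑ i ∈ range (2 * r + 2), q ^ i + q ^ (2 * r + 2) + q ^ (2 * r + 2 + 1)
        = (∑ i ∈ range (2 * r + 2), q ^ i) + q ^ (2 * r + 2) * (q + 1) := by ring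
    rw [h2]
    exact Nat.dvd_add ih (Dvd.intro_left _ rfl)

private lemma sigma_split (p : ℕ) (hp : p.Prime) (n : ℕ) (hn : n ≠ 0) :
    ∃ w, w ≠ 0 ∧ ¬ p ∣ w ∧ n = p ^ n.factorization p * w ∧
      (∑ d ∈ n.divisors, d) =
        (∑ d ∈ (p ^ n.factorization p).divisors, d) * ∑ d ∈ w.divisors, d := by
  have hw0 : 0 < ordCompl[p] n := Nat.ordCompl_pos p hn
  have hnd : ¬ p ∣ ordCompl[p] n := Nat.not_dvd_ordCompl hp hn
  have hcop : Nat.Coprime (p ^ n.factorization p) (ordCompl[p] n) :=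
    Nat.Coprime.pow_left _ (hp.coprime_iff_not_dvd.mpr hnd)
  refine ⟨ordCompl[p] n, hw0.ne', hnd, (Nat.ordProj_mul_ordCompl_eq_self n p).symm, ?_⟩
  conv_lhs => rw [← Nat.ordProj_mul_ordCompl_eq_self n p]
  exact hcop.sum_divisors_mul

private lemma le_sum_divisors (w : ℕ) (hw : w ≠ 0) : w ≤ ∑ d ∈ w.divisors, d :=
  Finset.single_le_sum (f := id) (fun i _ => Nat.zero_le i) (Nat.mem_divisors_self w hw)

set_option maxHeartbeats 1000000 in
theorem stmt_16 (q : ℕ) (hq : q.Prime) (hq165 : q % 165 = 164) :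
    ¬ ∃ (n m e : ℕ), Odd n ∧ Nat.Perfect n ∧ n = q ^ e * m ^ 2 ∧
      Nat.Coprime q m ∧ q % 4 = 1 ∧ e % 4 = 1 := by
  rintro ⟨n, m, e, -, hperf, hn, hqm, -, he4⟩
  have hq164 : 164 ≤ q := hq165 ▸ Nat.mod_le q 165
  have hnpos : 0 < n := hperf.2
  have hσ : (∑ d ∈ n.divisors, d) = 2 * n :=
    (Nat.perfect_iff_sum_divisors_eq_two_mul hnpos).mp hperf
  have hm0 : m ≠ 0 := by rintro rfl; rw [hn] at hnpos; simp at hnpos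
  have hqe0 : q ^ e ≠ 0 := pow_ne_zero _ hq.pos.ne'
  -- e is odd
  obtain ⟨r, hr⟩ : ∃ r, e = 2 * r + 1 := ⟨e / 2, by omega⟩
  -- sigma of q^e
  have hcop : Nat.Coprime (q ^ e) (m ^ 2) := Nat.Coprime.pow e 2 hqm
  have hsplitqm : (∑ d ∈ n.divisors, d) =
      (∑ d ∈ (q ^ e).divisors, d) * ∑ d ∈ (m ^ 2).divisors, d := by
    rw [hn]; exact hcop.sum_divisors_mul
  have hsq : (∑ d ∈ (q ^ e).divisors, d) = ∑ i ∈ range (e + 1), q ^ i := by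
    rw [Nat.sum_divisors_prime_pow hq]
  have hdvd165 : (165 : ℕ) ∣ q + 1 := by omega
  have hdvdσq : (q + 1) ∣ ∑ d ∈ (q ^ e).divisors, d := by
    rw [hsq, hr]
    have := geom_dvd q r
    simpa [show 2 * r + 1 + 1 = 2 * r + 2 by ring] using this
  have h165n : (165 : ℕ) ∣ 2 * n := by
    rw [← hσ, hsplitqm]
    exact Dvd.dvd.mul_right (hdvd165.trans hdvdσq) _
  -- 3, 5, 11 divide n
  have hdvdn : ∀ p : ℕ, p.Prime → p ∣ 165 → p ∣ n := by
    intro p hp hp165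
    have : p ∣ 2 * n := hp165.trans h165n
    rcases (Nat.Prime.dvd_mul hp).mp this with h | h
    · have h2 : p ≤ 2 := Nat.le_of_dvd (by norm_num) h
      have h3 := hp.two_le
      have h4 : p = 2 := by omega
      rw [h4] at hp165
      norm_num at hp165
    · exact h
  -- they don't divide q, hence divide m
  have hdvdm : ∀ p : ℕ, p.Prime → p ∣ 165 → p ∣ m := by
    intro p hp hp165
    have hpn := hdvdn p hp hp165
    have hpq : ¬ p ∣ q := by
      intro h
      have h1 : p = q := (Nat.prime_dvd_prime_iff_eq hp hq).mp h
      have h2 : p ≤ 165 := Nat.le_of_dvd (by norm_num) hp165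
      subst h1
      have h3 : p = 164 := by omega
      rw [h3] at hp165
      norm_num at hp165
    rw [hn] at hpn
    rcases (Nat.Prime.dvd_mul hp).mp hpn with h | h
    · exact absurd (hp.dvd_of_dvd_pow h) hpq
    · exact hp.dvd_of_dvd_pow h
  have h3m : (3 : ℕ) ∣ m := hdvdm 3 (by norm_num) (by norm_num)
  have h5m : (5 : ℕ) ∣ m := hdvdm 5 (by norm_num) (by norm_num)
  have h11m : (11 : ℕ) ∣ m := hdvdm 11 (by norm_num) (by norm_num)
  -- factorization of n at 3 is even
  have h3q : ¬ (3 : ℕ) ∣ q := by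
    intro h
    have : (3 : ℕ) = q := (Nat.prime_dvd_prime_iff_eq (by norm_num) hq).mp h
    omega
  have hA : n.factorization 3 = 2 * m.factorization 3 := by
    rw [hn, Nat.factorization_mul hqe0 (pow_ne_zero _ hm0), Nat.factorization_pow,
      Nat.factorization_pow]
    simp [Nat.factorization_eq_zero_of_not_dvd h3q]
  have hv3 : 1 ≤ m.factorization 3 :=
    (Nat.Prime.factorization_pos_of_dvd (by norm_num) hm0 h3m)
  -- extract 3
  obtain ⟨w1, hw1, h3w1, hnw1, hS1⟩ := sigma_split 3 (by norm_num) n hnpos.ne'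
  -- 5^2 and 11^2 divide n
  have h25n : (5 ^ 2 : ℕ) ∣ n := by
    rw [hn]; exact Dvd.dvd.mul_left (pow_dvd_pow_of_dvd h5m 2) _
  have h121n : (11 ^ 2 : ℕ) ∣ n := by
    rw [hn]; exact Dvd.dvd.mul_left (pow_dvd_pow_of_dvd h11m 2) _
  -- 5^2 divides w1
  have h25w1 : (5 ^ 2 : ℕ) ∣ w1 := by
    have hc : Nat.Coprime (5 ^ 2) (3 ^ n.factorization 3) :=
      Nat.Coprime.pow _ _ (by norm_num)
    exact hc.dvd_of_dvd_mul_left (hnw1 ▸ h25n)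
  have hB : 2 ≤ w1.factorization 5 :=
    (Nat.Prime.pow_dvd_iff_le_factorization (by norm_num) hw1).mp h25w1
  obtain ⟨w2, hw2, h5w2, hw1w2, hS2⟩ := sigma_split 5 (by norm_num) w1 hw1
  have h121w2 : (11 ^ 2 : ℕ) ∣ w2 := by
    have hc1 : Nat.Coprime (11 ^ 2) (3 ^ n.factorization 3) := Nat.Coprime.pow _ _ (by norm_num)
    have hc2 : Nat.Coprime (11 ^ 2) (5 ^ w1.factorization 5) := Nat.Coprime.pow _ _ (by norm_num)
    have h1 : (11 ^ 2 : ℕ) ∣ w1 := hc1.dvd_of_dvd_mul_left (hnw1 ▸ h121n)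
    exact hc2.dvd_of_dvd_mul_left (hw1w2 ▸ h1)
  have hC : 2 ≤ w2.factorization 11 :=
    (Nat.Prime.pow_dvd_iff_le_factorization (by norm_num) hw2).mp h121w2
  obtain ⟨w3, hw3, h11w3, hw2w3, hS3⟩ := sigma_split 11 (by norm_num) w2 hw2
  -- notation
  set A := n.factorization 3 with hAdef
  set B := w1.factorization 5 with hBdef
  set C := w2.factorization 11 with hCdef
  have hsig3 : (∑ d ∈ ((3:ℕ) ^ A).divisors, d) = ∑ i ∈ range (A + 1), 3 ^ i :=
    Nat.sum_divisors_prime_pow (by norm_num)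
  have hsig5 : (∑ d ∈ ((5:ℕ) ^ B).divisors, d) = ∑ i ∈ range (B + 1), 5 ^ i :=
    Nat.sum_divisors_prime_pow (by norm_num)
  have hsig11 : (∑ d ∈ ((11:ℕ) ^ C).divisors, d) = ∑ i ∈ range (C + 1), 11 ^ i :=
    Nat.sum_divisors_prime_pow (by norm_num)
  -- combined sigma equation: 2n = S3 * S5 * S11 * S w3
  have hStot : 2 * n = (∑ i ∈ range (A + 1), 3 ^ i) * ((∑ i ∈ range (B + 1), 5 ^ i) *
      ((∑ i ∈ range (C + 1), 11 ^ i) * ∑ d ∈ w3.divisors, d)) := by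
    rw [← hσ, hS1, hsig3, hS2, hsig5, hS3, hsig11]
  have hntot : n = 3 ^ A * (5 ^ B * (11 ^ C * w3)) := by
    rw [hnw1, hw1w2, hw2w3]
  have hb5 : 31 * 5 ^ B ≤ 25 * ∑ i ∈ range (B + 1), 5 ^ i := by
    refine sum_pow_lb 5 31 25 2 ?_ (by norm_num) B hB
    norm_num [Finset.sum_range_succ]
  have hb11 : 133 * 11 ^ C ≤ 121 * ∑ i ∈ range (C + 1), 11 ^ i := by
    refine sum_pow_lb 11 133 121 2 ?_ (by norm_num) C hC
    norm_num [Finset.sum_range_succ]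
  have hw3le : w3 ≤ ∑ d ∈ w3.divisors, d := le_sum_divisors w3 hw3
  rcases Nat.lt_or_ge (m.factorization 3) 2 with hv | hv
  · -- A = 2 : sigma(3^2) = 13 divides 2n, so 13 | n
    have hA2 : A = 2 := by omega
    have hs13 : (∑ i ∈ range (A + 1), 3 ^ i) = 13 := by
      rw [hA2]; norm_num [Finset.sum_range_succ]
    have h13n : (13 : ℕ) ∣ n := by
      have h13 : (13 : ℕ) ∣ 2 * n := by
        rw [hStot, hs13]; exact ⟨_, rfl⟩
      rcases (Nat.Prime.dvd_mul (by norm_num)).mp h13 with h | h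
      · norm_num at h
      · exact h
    -- 13 divides w3
    have h13w3 : (13 : ℕ) ∣ w3 := by
      have hc1 : Nat.Coprime 13 (3 ^ A) := Nat.Coprime.pow_right _ (by norm_num)
      have hc2 : Nat.Coprime 13 (5 ^ B) := Nat.Coprime.pow_right _ (by norm_num)
      have hc3 : Nat.Coprime 13 (11 ^ C) := Nat.Coprime.pow_right _ (by norm_num)
      have h1 := hc1.dvd_of_dvd_mul_left (hntot ▸ h13n)
      have h2 := hc2.dvd_of_dvd_mul_left h1
      exact hc3.dvd_of_dvd_mul_left h2
    have hD : 1 ≤ w3.factorization 13 :=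
      Nat.Prime.factorization_pos_of_dvd (by norm_num) hw3 h13w3
    obtain ⟨w4, hw4, h13w4, hw3w4, hS4⟩ := sigma_split 13 (by norm_num) w3 hw3
    set D := w3.factorization 13 with hDdef
    have hsig13 : (∑ d ∈ ((13:ℕ) ^ D).divisors, d) = ∑ i ∈ range (D + 1), 13 ^ i :=
      Nat.sum_divisors_prime_pow (by norm_num)
    have hb13 : 14 * 13 ^ D ≤ 13 * ∑ i ∈ range (D + 1), 13 ^ i := by
      refine sum_pow_lb 13 14 13 1 ?_ (by norm_num) D hD
      norm_num [Finset.sum_range_succ]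
    have hw4le : w4 ≤ ∑ d ∈ w4.divisors, d := le_sum_divisors w4 hw4
    -- assemble
    have hStot2 : 2 * n = 13 * ((∑ i ∈ range (B + 1), 5 ^ i) *
        ((∑ i ∈ range (C + 1), 11 ^ i) * ((∑ i ∈ range (D + 1), 13 ^ i) *
          ∑ d ∈ w4.divisors, d))) := by
      rw [hStot, hs13, hS4, hsig13]
    have hntot2 : n = 9 * (5 ^ B * (11 ^ C * (13 ^ D * w4))) := by
      rw [hntot, hw3w4, hA2]; norm_num
    set S5 := ∑ i ∈ range (B + 1), 5 ^ i
    set S11 := ∑ i ∈ range (C + 1), 11 ^ i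
    set S13 := ∑ i ∈ range (D + 1), 13 ^ i
    set Sw := ∑ d ∈ w4.divisors, d
    -- upper bound: 13 * S5 * S11 * S13 ≤ 18 * (5^B * 11^C * 13^D)
    have hupper : 13 * (S5 * (S11 * S13)) * w4 ≤ 18 * (5 ^ B * (11 ^ C * 13 ^ D)) * w4 := by
      calc 13 * (S5 * (S11 * S13)) * w4 ≤ 13 * (S5 * (S11 * S13)) * Sw :=
            Nat.mul_le_mul_left _ hw4le
        _ = 2 * n := by rw [hStot2]; ring
        _ = 18 * (5 ^ B * (11 ^ C * 13 ^ D)) * w4 := by rw [hntot2]; ring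
    have hup : 13 * (S5 * (S11 * S13)) ≤ 18 * (5 ^ B * (11 ^ C * 13 ^ D)) :=
      Nat.le_of_mul_le_mul_right hupper (Nat.pos_of_ne_zero hw4)
    -- lower bound
    have hlower : 57722 * (5 ^ B * (11 ^ C * 13 ^ D)) ≤ 39325 * (S5 * (S11 * S13)) := by
      calc 57722 * (5 ^ B * (11 ^ C * 13 ^ D))
          = (31 * 5 ^ B) * ((133 * 11 ^ C) * (14 * 13 ^ D)) := by ring
        _ ≤ (25 * S5) * ((121 * S11) * (13 * S13)) :=
            Nat.mul_le_mul hb5 (Nat.mul_le_mul hb11 hb13)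
        _ = 39325 * (S5 * (S11 * S13)) := by ring
    have hQpos : 0 < 5 ^ B * (11 ^ C * 13 ^ D) := by positivity
    have hfin : (5 ^ B * (11 ^ C * 13 ^ D)) * 750386 ≤ (5 ^ B * (11 ^ C * 13 ^ D)) * 707850 := by
      calc (5 ^ B * (11 ^ C * 13 ^ D)) * 750386 = 13 * (57722 * (5 ^ B * (11 ^ C * 13 ^ D))) := by
            ring
        _ ≤ 13 * (39325 * (S5 * (S11 * S13))) := Nat.mul_le_mul_left _ hlower
        _ = 39325 * (13 * (S5 * (S11 * S13))) := by ring
        _ ≤ 39325 * (18 * (5 ^ B * (11 ^ C * 13 ^ D))) := Nat.mul_le_mul_left _ hup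
        _ = (5 ^ B * (11 ^ C * 13 ^ D)) * 707850 := by ring
    have := Nat.le_of_mul_le_mul_left (by
      calc (5 ^ B * (11 ^ C * 13 ^ D)) * 750386 ≤ (5 ^ B * (11 ^ C * 13 ^ D)) * 707850 := hfin) hQpos
    norm_num at this
  · -- A ≥ 4
    have hA4 : 4 ≤ A := by omega
    have hb3 : 121 * 3 ^ A ≤ 81 * ∑ i ∈ range (A + 1), 3 ^ i := by
      refine sum_pow_lb 3 121 81 4 ?_ (by norm_num) A hA4
      norm_num [Finset.sum_range_succ]
    set S3 := ∑ i ∈ range (A + 1), 3 ^ i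
    set S5 := ∑ i ∈ range (B + 1), 5 ^ i
    set S11 := ∑ i ∈ range (C + 1), 11 ^ i
    set Sw := ∑ d ∈ w3.divisors, d
    have hupper : S3 * (S5 * S11) * w3 ≤ 2 * (3 ^ A * (5 ^ B * 11 ^ C)) * w3 := by
      calc S3 * (S5 * S11) * w3 ≤ S3 * (S5 * S11) * Sw := Nat.mul_le_mul_left _ hw3le
        _ = 2 * n := by rw [hStot]; ring
        _ = 2 * (3 ^ A * (5 ^ B * 11 ^ C)) * w3 := by rw [hntot]; ring
    have hup : S3 * (S5 * S11) ≤ 2 * (3 ^ A * (5 ^ B * 11 ^ C)) :=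
      Nat.le_of_mul_le_mul_right hupper (Nat.pos_of_ne_zero hw3)
    have hlower : 498883 * (3 ^ A * (5 ^ B * 11 ^ C)) ≤ 245025 * (S3 * (S5 * S11)) := by
      calc 498883 * (3 ^ A * (5 ^ B * 11 ^ C))
          = (121 * 3 ^ A) * ((31 * 5 ^ B) * (133 * 11 ^ C)) := by ring
        _ ≤ (81 * S3) * ((25 * S5) * (121 * S11)) :=
            Nat.mul_le_mul hb3 (Nat.mul_le_mul hb5 hb11)
        _ = 245025 * (S3 * (S5 * S11)) := by ring
    have hQpos : 0 < 3 ^ A * (5 ^ B * 11 ^ C) := by positivity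
    have hfin : (3 ^ A * (5 ^ B * 11 ^ C)) * 498883 ≤ (3 ^ A * (5 ^ B * 11 ^ C)) * 490050 := by
      calc (3 ^ A * (5 ^ B * 11 ^ C)) * 498883 = 498883 * (3 ^ A * (5 ^ B * 11 ^ C)) := by ring
        _ ≤ 245025 * (S3 * (S5 * S11)) := hlower
        _ ≤ 245025 * (2 * (3 ^ A * (5 ^ B * 11 ^ C))) := Nat.mul_le_mul_left _ hup
        _ = (3 ^ A * (5 ^ B * 11 ^ C)) * 490050 := by ring
    have := Nat.le_of_mul_le_mul_left hfin hQpos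
    norm_num at this
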